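/- Let C be a positive prevariety and α : A* → M a morphism into a finite monoid. If (s₁,t₁) and (s₂,t₂) are C-pairs for α (meaning α⁻¹(sᵢ) is not C-separable from α⁻¹(tᵢ)), then (s₁s₂, t₁t₂) is also a C-pair for α. -/

import Mathlib

open Classical in
lemma finset_inter_mem {A N : Type*} (C : Set (Set (FreeMonoid A)))
    (huniv : Set.univ ∈ C)
    (hinter : ∀ L ∈ C, ∀ K ∈ C, L ∩ K ∈ C)
    (s : Finset N) (g : N → Set (FreeMonoid A)) (hg : ∀ n, g n ∈ C) :
    (⋂ n ∈ s, g n) ∈ C := by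
  induction s using Finset.induction_on with
  | empty => simpa using huniv
  | insert _ _ hx ih =>
    rw [Finset.set_biInter_insert]
    exact hinter _ (hg _) _ ih


/-- Corollary `pairmult`: for a positive prevariety `C` (a lattice of regular
languages closed under quotients) and a morphism `α : A* → M` into a finite
monoid, `C`-pairs are closed under componentwise multiplication. Here `(s,t)`
is a `C`-pair when `α⁻¹(s)` is not `C`-separable from `α⁻¹(t)`. -/
theorem stmt_12 {A : Type*} [Fintype A] {M : Type*} [Monoid M] [Fintype M]
    (C : Set (Set (FreeMonoid A)))
    (hreg : ∀ L ∈ C, ∃ (N : Type) (_ : Monoid N) (_ : Fintype N),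
      ∃ (φ : FreeMonoid A →* N) (F : Set N), L = φ ⁻¹' F)
    (hempty : ∅ ∈ C) (huniv : Set.univ ∈ C)
    (hunion : ∀ L ∈ C, ∀ K ∈ C, L ∪ K ∈ C)
    (hinter : ∀ L ∈ C, ∀ K ∈ C, L ∩ K ∈ C)
    (hquot : ∀ L ∈ C, ∀ w : FreeMonoid A,
      {u | w * u ∈ L} ∈ C ∧ {u | u * w ∈ L} ∈ C)
    (α : FreeMonoid A →* M) (s₁ t₁ s₂ t₂ : M)
    (h1 : ¬ ∃ K ∈ C, α ⁻¹' {s₁} ⊆ K ∧ K ∩ α ⁻¹' {t₁} = ∅)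
    (h2 : ¬ ∃ K ∈ C, α ⁻¹' {s₂} ⊆ K ∧ K ∩ α ⁻¹' {t₂} = ∅) :
    ¬ ∃ K ∈ C, α ⁻¹' {s₁ * s₂} ⊆ K ∧ K ∩ α ⁻¹' {t₁ * t₂} = ∅ := by
  classical
  rintro ⟨K, hKC, hsub, hdisj⟩
  obtain ⟨N, _, _, φ, F, hKF⟩ := hreg K hKC
  -- for each n : N, pick a representative v with α v = s₁ and φ v = n if one exists
  set g : N → Set (FreeMonoid A) := fun n =>
    if h : ∃ v, α v = s₁ ∧ φ v = n then {u | h.choose * u ∈ K} else Set.univ with hg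
  have hgC : ∀ n, g n ∈ C := by
    intro n
    simp only [hg]
    split
    · exact (hquot K hKC _).1
    · exact huniv
  set K₂ : Set (FreeMonoid A) := ⋂ n ∈ (Finset.univ : Finset N), g n with hK₂
  have hK₂C : K₂ ∈ C := finset_inter_mem C huniv hinter _ g hgC
  -- K₂ contains α⁻¹(s₂)
  have hsub₂ : α ⁻¹' {s₂} ⊆ K₂ := by
    intro u hu
    simp only [Set.mem_preimage, Set.mem_singleton_iff] at hu
    simp only [hK₂, Set.mem_iInter, Finset.mem_univ]
    intro n _
    simp only [hg]
    split
    · next h =>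
      obtain ⟨hv, -⟩ := h.choose_spec
      apply hsub
      simp [map_mul, hv, hu]
    · trivial
  -- so K₂ meets α⁻¹(t₂)
  have hne₂ : (K₂ ∩ α ⁻¹' {t₂}).Nonempty := by
    rcases Set.eq_empty_or_nonempty (K₂ ∩ α ⁻¹' {t₂}) with h | h
    · exact absurd ⟨K₂, hK₂C, hsub₂, h⟩ h2
    · exact h
  obtain ⟨u₂, hu₂K, hu₂⟩ := hne₂
  simp only [Set.mem_preimage, Set.mem_singleton_iff] at hu₂
  -- key: for every v with α v = s₁, v * u₂ ∈ K
  have hkey : ∀ v : FreeMonoid A, α v = s₁ → v * u₂ ∈ K := by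
    intro v hv
    rw [hK₂] at hu₂K
    have hmem := Set.mem_iInter₂.1 hu₂K (φ v) (Finset.mem_univ _)
    have hex : ∃ w, α w = s₁ ∧ φ w = φ v := ⟨v, hv, rfl⟩
    simp only [hg, dif_pos hex] at hmem
    obtain ⟨-, hφ⟩ := hex.choose_spec
    have : φ (hex.choose * u₂) ∈ F := by rw [hKF] at hmem; exact hmem
    rw [hKF]
    show φ (v * u₂) ∈ F
    rwa [map_mul, ← hφ, ← map_mul]
  -- now {v | v * u₂ ∈ K} separates s₁ from t₁, contradiction
  set K₁ : Set (FreeMonoid A) := {v | v * u₂ ∈ K} with hK₁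
  have hK₁C : K₁ ∈ C := (hquot K hKC u₂).2
  have hsub₁ : α ⁻¹' {s₁} ⊆ K₁ := fun v hv => hkey v hv
  have hne₁ : (K₁ ∩ α ⁻¹' {t₁}).Nonempty := by
    rcases Set.eq_empty_or_nonempty (K₁ ∩ α ⁻¹' {t₁}) with h | h
    · exact absurd ⟨K₁, hK₁C, hsub₁, h⟩ h1
    · exact h
  obtain ⟨v₁, hv₁K, hv₁⟩ := hne₁
  simp only [Set.mem_preimage, Set.mem_singleton_iff] at hv₁
  have : v₁ * u₂ ∈ K ∩ α ⁻¹' {t₁ * t₂} := by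
    refine ⟨hv₁K, ?_⟩
    simp [map_mul, hv₁, hu₂]
  rw [hdisj] at this
  exact this
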